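/- For every non-negative integer n, (2n+1) * binom(2n, n) equals the sum over all triples (i, j, k) of non-negative integers with i + j + k = n of binom(2i, i) * binom(2j, j) * binom(2k, k). -/

import Mathlib

open Finset

private def T (n : ℕ) : ℕ := ∑ i ∈ range (n + 1), Nat.centralBinom i * Nat.centralBinom (n - i)

private def S (n : ℕ) : ℕ := ∑ i ∈ range (n + 1), i * (Nat.centralBinom i * Nat.centralBinom (n - i))

private lemma two_S (n : ℕ) : 2 * S n = n * T n := by
  have h : S n = ∑ i ∈ range (n + 1), (n - i) * (Nat.centralBinom (n - i) * Nat.centralBinom i) := by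
    rw [S, ← Finset.sum_range_reflect]
    apply Finset.sum_congr rfl
    intro i hi
    rw [Finset.mem_range] at hi
    have : n - (n - i) = i := Nat.sub_sub_self (Nat.lt_succ_iff.mp hi)
    simp only [Nat.add_sub_cancel]
    rw [this]
  rw [two_mul, T, Finset.mul_sum]
  nth_rewrite 2 [h]
  rw [S, ← Finset.sum_add_distrib]
  apply Finset.sum_congr rfl
  intro i hi
  rw [Finset.mem_range] at hi
  have hin : i ≤ n := Nat.lt_succ_iff.mp hi
  have : i + (n - i) = n := Nat.add_sub_cancel' hin
  rw [mul_comm (Nat.centralBinom (n - i)) (Nat.centralBinom i), ← add_mul, this]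

private lemma S_succ (n : ℕ) : S (n + 1) = 4 * S n + 2 * T n := by
  rw [S, Finset.sum_range_succ']
  simp only [zero_mul, add_zero]
  have h : ∀ i ∈ range (n + 1),
      (i + 1) * (Nat.centralBinom (i + 1) * Nat.centralBinom (n + 1 - (i + 1))) =
      4 * (i * (Nat.centralBinom i * Nat.centralBinom (n - i))) +
        2 * (Nat.centralBinom i * Nat.centralBinom (n - i)) := by
    intro i _
    have hs : n + 1 - (i + 1) = n - i := by omega
    rw [hs, ← mul_assoc, Nat.succ_mul_centralBinom_succ]
    ring
  rw [Finset.sum_congr rfl h, Finset.sum_add_distrib, ← Finset.mul_sum, ← Finset.mul_sum]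
  rfl

private lemma T_eq (n : ℕ) : T n = 4 ^ n := by
  induction n with
  | zero => simp [T, Nat.centralBinom]
  | succ n ih =>
    have key : (n + 1) * T (n + 1) = (n + 1) * 4 ^ (n + 1) := by
      have h1 : 2 * (2 * S (n + 1)) = 2 * ((n + 1) * T (n + 1)) := by rw [two_S]
      have h2 : 2 * (2 * S (n + 1)) = 2 * ((n + 1) * 4 ^ (n + 1)) := by
        rw [S_succ]
        have := two_S n
        calc 2 * (2 * (4 * S n + 2 * T n)) = 8 * (2 * S n) + 8 * T n := by ring
          _ = 8 * (n * T n) + 8 * T n := by rw [this]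
          _ = 2 * ((n + 1) * 4 ^ (n + 1)) := by rw [ih, pow_succ]; ring
      omega
    exact Nat.eq_of_mul_eq_mul_left (Nat.succ_pos n) key

private lemma U_eq (n : ℕ) :
    ∑ i ∈ range (n + 1), Nat.centralBinom i * 4 ^ (n - i) = (2 * n + 1) * Nat.centralBinom n := by
  induction n with
  | zero => simp [Nat.centralBinom]
  | succ n ih =>
    rw [Finset.sum_range_succ, Nat.sub_self, pow_zero, mul_one]
    have h : ∀ i ∈ range (n + 1),
        Nat.centralBinom i * 4 ^ (n + 1 - i) = 4 * (Nat.centralBinom i * 4 ^ (n - i)) := by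
      intro i hi
      rw [Finset.mem_range] at hi
      have : n + 1 - i = (n - i) + 1 := by omega
      rw [this, pow_succ]
      ring
    rw [Finset.sum_congr rfl h, ← Finset.mul_sum, ih]
    have hc := Nat.succ_mul_centralBinom_succ n
    calc 4 * ((2 * n + 1) * Nat.centralBinom n) + Nat.centralBinom (n + 1)
        = 2 * (2 * (2 * n + 1) * Nat.centralBinom n) + Nat.centralBinom (n + 1) := by ring
      _ = 2 * ((n + 1) * Nat.centralBinom (n + 1)) + Nat.centralBinom (n + 1) := by rw [hc]
      _ = (2 * (n + 1) + 1) * Nat.centralBinom (n + 1) := by ring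

theorem triple_convolution_identity (n : ℕ) :
    (2 * n + 1) * Nat.choose (2 * n) n =
      ∑ p ∈ Finset.HasAntidiagonal.antidiagonal n, ∑ q ∈ Finset.HasAntidiagonal.antidiagonal p.2,
        Nat.choose (2 * p.1) p.1 * Nat.choose (2 * q.1) q.1 *
          Nat.choose (2 * q.2) q.2 := by
  have key : ∀ m : ℕ, ∑ q ∈ Finset.HasAntidiagonal.antidiagonal m,
      Nat.choose (2 * q.1) q.1 * Nat.choose (2 * q.2) q.2 = 4 ^ m := by
    intro m
    rw [Finset.Nat.sum_antidiagonal_eq_sum_range_succ_mk]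
    exact T_eq m
  rw [Finset.Nat.sum_antidiagonal_eq_sum_range_succ_mk]
  have h : ∀ i ∈ range (n + 1),
      (∑ q ∈ Finset.HasAntidiagonal.antidiagonal (n - i),
        Nat.choose (2 * i) i * Nat.choose (2 * q.1) q.1 * Nat.choose (2 * q.2) q.2) =
      Nat.centralBinom i * 4 ^ (n - i) := by
    intro i _
    rw [show (Nat.centralBinom i : ℕ) = Nat.choose (2 * i) i from rfl, ← key (n - i),
      Finset.mul_sum]
    apply Finset.sum_congr rfl
    intro q _
    ring
  rw [Finset.sum_congr rfl h, U_eq]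
  rfl
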